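/- For every w ∈ 𝔽 with |w| > 1, the bounded linear operator Â_w on c defined by (Â_w x)_k = w·(x_{k+1} + x_1 − 2l(x)) is chaotic: it possesses a hypercyclic vector and its set of periodic points is dense in c. -/

import Mathlib

open Filter Topology BoundedContinuousFunction

/-- The space `c` of convergent sequences, as a submodule of the bounded sequences
`ℕ →ᵇ 𝕜` with the sup-norm (the Lean index `k` corresponds to the paper's index `k + 1`,
so the paper's first entry `x_1` is `x 0`). -/
def convSeq (𝕜 : Type*) [RCLike 𝕜] : Submodule 𝕜 (ℕ →ᵇ 𝕜) where
  carrier := {x | ∃ L : 𝕜, Tendsto ⇑x atTop (nhds L)}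
  add_mem' := by
    rintro x y ⟨Lx, hx⟩ ⟨Ly, hy⟩
    exact ⟨Lx + Ly, by rw [BoundedContinuousFunction.coe_add]; exact hx.add hy⟩
  zero_mem' := ⟨0, by rw [BoundedContinuousFunction.coe_zero]; exact tendsto_const_nhds⟩
  smul_mem' := by
    rintro c x ⟨L, hx⟩
    exact ⟨c • L, by simpa using hx.const_smul c⟩

/-- Build an element of `convSeq` from a sequence, a bound and a limit. -/
noncomputable def mkConv (𝕜 : Type*) [RCLike 𝕜] (f : ℕ → 𝕜) (C : ℝ) (hb : ∀ k, ‖f k‖ ≤ C)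
    (L : 𝕜) (hL : Tendsto f atTop (nhds L)) : convSeq 𝕜 :=
  ⟨BoundedContinuousFunction.ofNormedAddCommGroup f continuous_of_discreteTopology C hb,
   ⟨L, hL⟩⟩

@[simp] lemma mkConv_coe (𝕜 : Type*) [RCLike 𝕜] (f : ℕ → 𝕜) (C : ℝ) (hb : ∀ k, ‖f k‖ ≤ C)
    (L : 𝕜) (hL : Tendsto f atTop (nhds L)) (k : ℕ) :
    ((mkConv 𝕜 f C hb L hL : convSeq 𝕜) : ℕ →ᵇ 𝕜) k = f k := rfl

/-- The eventually-constant approximating sequences, indexed by a list and a tail value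
(through a countable dense family `u` in `𝕜`). -/
noncomputable def approxSeq (𝕜 : Type*) [RCLike 𝕜] (u : ℕ → 𝕜) (p : List ℕ × ℕ) : convSeq 𝕜 :=
  mkConv 𝕜 (fun k => u (p.1.getD k p.2)) ((p.1.map fun a => ‖u a‖).sum + ‖u p.2‖)
    (by
      intro k
      show ‖u (p.1.getD k p.2)‖ ≤ _
      rcases lt_or_ge k p.1.length with h | h
      · rw [List.getD_eq_getElem p.1 p.2 h]
        have hmem : ‖u p.1[k]‖ ∈ p.1.map fun a => ‖u a‖ :=
          List.mem_map.2 ⟨p.1[k], List.getElem_mem _, rfl⟩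
        have := List.single_le_sum (l := p.1.map fun a => ‖u a‖)
          (by intro x hx; rcases List.mem_map.1 hx with ⟨a, _, rfl⟩; exact norm_nonneg _) _ hmem
        have h2 : (0:ℝ) ≤ ‖u p.2‖ := norm_nonneg _
        linarith
      · rw [List.getD_eq_default p.1 p.2 h]
        have : (0:ℝ) ≤ (p.1.map fun a => ‖u a‖).sum := by
          apply List.sum_nonneg
          intro x hx
          rcases List.mem_map.1 hx with ⟨a, _, rfl⟩
          exact norm_nonneg _
        linarith)
    (u p.2)
    (by
      apply tendsto_const_nhds.congr'
      filter_upwards [eventually_ge_atTop p.1.length] with k hk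
      rw [List.getD_eq_default p.1 p.2 hk])

@[simp] lemma approxSeq_coe (𝕜 : Type*) [RCLike 𝕜] (u : ℕ → 𝕜) (p : List ℕ × ℕ) (k : ℕ) :
    ((approxSeq 𝕜 u p : convSeq 𝕜) : ℕ →ᵇ 𝕜) k = u (p.1.getD k p.2) := rfl


set_option maxHeartbeats 1000000 in
/-- For every `w` with `‖w‖ > 1`, the bounded linear operator `Â_w` on `c`
defined by `(Â_w x)_k = w (x_{k+1} + x_1 - 2 l(x))` (paper's `1`-based `k ≥ 1`, i.e.
`(Â_w x) k = w * (x (k+1) + x 0 - 2 l(x))` in `0`-based indexing, where `l` is the limit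
functional) is chaotic: it possesses a hypercyclic vector and its set of periodic points is
dense in `c`. -/
theorem bounded_operator_on_c_chaotic
    (𝕜 : Type*) [RCLike 𝕜] (w : 𝕜) (hw : 1 < ‖w‖)
    (l : convSeq 𝕜 → 𝕜)
    (hl : ∀ x : convSeq 𝕜, Tendsto (fun k : ℕ => (x : ℕ →ᵇ 𝕜) k) atTop (nhds (l x)))
    (A : convSeq 𝕜 →L[𝕜] convSeq 𝕜)
    (hA : ∀ (x : convSeq 𝕜) (k : ℕ),
      (A x : ℕ →ᵇ 𝕜) k = w * ((x : ℕ →ᵇ 𝕜) (k + 1) + (x : ℕ →ᵇ 𝕜) 0 - 2 * l x)) :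
    (∃ x : convSeq 𝕜, Dense (Set.range fun n : ℕ => (A ^ n) x)) ∧
      Dense {x : convSeq 𝕜 | ∃ N : ℕ, 1 ≤ N ∧ (A ^ N) x = x} := by
  have hw0 : w ≠ 0 := by
    intro h; rw [h, norm_zero] at hw; linarith
  have hw1 : (1:ℝ) ≤ ‖w‖ := hw.le
  -- uniqueness of limits
  have hlim_unique : ∀ (x : convSeq 𝕜) (L : 𝕜),
      Tendsto (fun k : ℕ => (x : ℕ →ᵇ 𝕜) k) atTop (nhds L) → l x = L :=
    fun x L h => tendsto_nhds_unique (hl x) h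
  have hl_norm : ∀ y : convSeq 𝕜, ‖l y‖ ≤ ‖(y : ℕ →ᵇ 𝕜)‖ := by
    intro y
    exact le_of_tendsto' (hl y).norm fun k => (y : ℕ →ᵇ 𝕜).norm_coe_le_norm k
  -- the iterate formula
  have key : ∀ (x : convSeq 𝕜) (n k : ℕ),
      (((A ^ (n+1)) x : convSeq 𝕜) : ℕ →ᵇ 𝕜) k =
        w ^ (n+1) * ((x : ℕ →ᵇ 𝕜) (k+n+1) + (x : ℕ →ᵇ 𝕜) n - 2 * l x) := by
    intro x n
    induction n with
    | zero =>
      intro k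
      simpa [pow_one] using hA x k
    | succ n ih =>
      have hlimn : Tendsto (fun k : ℕ => (((A ^ (n+1)) x : convSeq 𝕜) : ℕ →ᵇ 𝕜) k) atTop
          (nhds (w ^ (n+1) * ((x : ℕ →ᵇ 𝕜) n - l x))) := by
        have h1 : Tendsto (fun k : ℕ => (x : ℕ →ᵇ 𝕜) (k + (n+1))) atTop (nhds (l x)) :=
          (hl x).comp (tendsto_add_atTop_nat (n+1))
        have h2 : Tendsto
            (fun k : ℕ => w ^ (n+1) * ((x : ℕ →ᵇ 𝕜) (k+n+1) + (x : ℕ →ᵇ 𝕜) n - 2 * l x))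
            atTop (nhds (w ^ (n+1) * (l x + (x : ℕ →ᵇ 𝕜) n - 2 * l x))) :=
          (((h1.add tendsto_const_nhds).sub tendsto_const_nhds).const_mul _)
        have h3 : w ^ (n+1) * (l x + (x : ℕ →ᵇ 𝕜) n - 2 * l x)
            = w ^ (n+1) * ((x : ℕ →ᵇ 𝕜) n - l x) := by ring
        rw [h3] at h2
        exact h2.congr fun k => (ih k).symm
      have hlA : l ((A ^ (n+1)) x) = w ^ (n+1) * ((x : ℕ →ᵇ 𝕜) n - l x) :=
        hlim_unique _ _ hlimn
      intro k
      have hpow : ((A ^ (n+2)) x : convSeq 𝕜) = A ((A ^ (n+1)) x) := by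
        rw [pow_succ']; rfl
      have step := hA ((A ^ (n+1)) x) k
      rw [hpow]
      rw [step, ih, ih, hlA]
      have e1 : k + 1 + n + 1 = k + (n+1) + 1 := by omega
      have e2 : 0 + n + 1 = n + 1 := by omega
      rw [e1, e2]
      ring
  -- powers of ‖w‖ exceed any bound
  have hpow_big : ∀ (R : ℝ) (B : ℕ), ∃ t, B ≤ t ∧ R ≤ ‖w‖ ^ t := by
    intro R B
    have h := tendsto_pow_atTop_atTop_of_one_lt hw
    exact ((eventually_ge_atTop B).and (h.eventually_ge_atTop R)).exists
  have hper : Dense {x : convSeq 𝕜 | ∃ N : ℕ, 1 ≤ N ∧ (A ^ N) x = x} := by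
    rw [Metric.dense_iff]
    intro y ε hε
    set L : 𝕜 := l y with hLdef
    set C : ℝ := 2 * ‖(y : ℕ →ᵇ 𝕜)‖ + 1 with hCdef
    have hC0 : 0 < C := by positivity
    obtain ⟨m, hm⟩ : ∃ m, ∀ k ≥ m, ‖(y : ℕ →ᵇ 𝕜) k - L‖ ≤ ε/3 := by
      obtain ⟨m, hm⟩ := Metric.tendsto_atTop.1 (hl y) (ε/3) (by linarith)
      exact ⟨m, fun k hk => by have := hm k hk; rw [dist_eq_norm] at this; linarith⟩
    obtain ⟨N, hNm, hNw⟩ : ∃ N, m + 1 ≤ N ∧ C / (ε/3) ≤ ‖w‖ ^ N := hpow_big _ _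
    have hN1 : 1 ≤ N := by omega
    have hN0 : 0 < N := hN1
    set ζ : ℕ → 𝕜 := fun j => if j = 0 then L else (y : ℕ →ᵇ 𝕜) (j-1) - L with hζdef
    have hLn : ‖L‖ ≤ ‖(y : ℕ →ᵇ 𝕜)‖ := hl_norm y
    have hζC : ∀ j, ‖ζ j‖ ≤ C := by
      intro j
      by_cases h : j = 0
      · simp only [hζdef, if_pos h]
        nlinarith [norm_nonneg (y : ℕ →ᵇ 𝕜)]
      · simp only [hζdef, if_neg h]
        have h2 := (y : ℕ →ᵇ 𝕜).norm_coe_le_norm (j-1)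
        have h3 := norm_sub_le ((y : ℕ →ᵇ 𝕜) (j-1)) L
        linarith
    set f : ℕ → 𝕜 := fun k => w⁻¹ ^ (N * ((k+1)/N)) * ζ ((k+1) % N) + L with hfdef
    have hwinv1 : ‖w‖⁻¹ ≤ 1 := inv_le_one_of_one_le₀ hw1
    have hfb : ∀ k, ‖f k‖ ≤ C + ‖L‖ := by
      intro k
      have h1 : ‖w⁻¹ ^ (N * ((k+1)/N))‖ ≤ 1 := by
        rw [norm_pow, norm_inv]; exact pow_le_one₀ (by positivity) hwinv1
      calc ‖f k‖ ≤ ‖w⁻¹ ^ (N*((k+1)/N)) * ζ ((k+1)%N)‖ + ‖L‖ := norm_add_le _ _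
        _ ≤ 1 * C + ‖L‖ := by
            rw [norm_mul]
            have := mul_le_mul h1 (hζC ((k+1)%N)) (norm_nonneg _) zero_le_one
            linarith
        _ = C + ‖L‖ := by ring
    have hftail : ∀ k, ‖f k - L‖ ≤ ‖w‖⁻¹ ^ (N * ((k+1)/N)) * C := by
      intro k
      have h0 : f k - L = w⁻¹ ^ (N * ((k+1)/N)) * ζ ((k+1) % N) := by
        simp [hfdef]
      rw [h0, norm_mul, norm_pow, norm_inv]
      have := hζC ((k+1)%N)
      have hp : (0:ℝ) ≤ ‖w‖⁻¹ ^ (N * ((k+1)/N)) := by positivity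
      exact mul_le_mul_of_nonneg_left this hp
    have hflim : Tendsto f atTop (nhds L) := by
      have hb2 : ∀ k : ℕ, ‖f k - L‖ ≤ C * ‖w‖⁻¹ ^ (k+1-N) := by
        intro k
        have hmod : (k+1) % N < N := Nat.mod_lt _ hN0
        have hdm : N * ((k+1)/N) + (k+1) % N = k+1 := Nat.div_add_mod _ _
        have hexp : k+1-N ≤ N * ((k+1)/N) := by omega
        have h2 : ‖w‖⁻¹ ^ (N*((k+1)/N)) ≤ ‖w‖⁻¹ ^ (k+1-N) :=
          pow_le_pow_of_le_one (by positivity) hwinv1 hexp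
        calc ‖f k - L‖ ≤ ‖w‖⁻¹ ^ (N * ((k+1)/N)) * C := hftail k
          _ ≤ ‖w‖⁻¹ ^ (k+1-N) * C := mul_le_mul_of_nonneg_right h2 hC0.le
          _ = C * ‖w‖⁻¹ ^ (k+1-N) := by ring
      have h0 : Tendsto (fun k : ℕ => f k - L) atTop (nhds 0) := by
        apply squeeze_zero_norm hb2
        have h1 : Tendsto (fun k : ℕ => ‖w‖⁻¹ ^ k) atTop (nhds 0) :=
          tendsto_pow_atTop_nhds_zero_of_lt_one (by positivity) (inv_lt_one_of_one_lt₀ hw)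
        have h2 : Tendsto (fun k : ℕ => k + 1 - N) atTop atTop :=
          tendsto_atTop_atTop.2 fun b => ⟨b + N, fun a ha => by omega⟩
        have h3 := (h1.comp h2).const_mul C
        simpa using h3
      have h4 := h0.add_const L
      simpa using h4
    set x : convSeq 𝕜 := mkConv 𝕜 f (C + ‖L‖) hfb L hflim with hxdef
    have hxcoe : ∀ k, (x : ℕ →ᵇ 𝕜) k = f k := fun k => rfl
    have hlx : l x = L := hlim_unique x L (by simpa [hxcoe] using hflim)
    obtain ⟨p, hp⟩ : ∃ p, N = p + 1 := ⟨N - 1, by omega⟩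
    subst hp
    have hfix : (A ^ (p+1)) x = x := by
      apply Subtype.ext
      apply BoundedContinuousFunction.ext
      intro k
      rw [key x p k, hlx]
      simp only [hxcoe]
      have hcancel : w ^ (p+1) * w⁻¹ ^ (p+1) = 1 := by
        rw [← mul_pow, mul_inv_cancel₀ hw0, one_pow]
      have hfp : f p = w⁻¹ ^ (p+1) * L + L := by
        simp only [hfdef]
        rw [Nat.div_self (by omega : 0 < p+1), Nat.mod_self]
        simp [hζdef, Nat.mul_one]
      have hfkN : f (k+p+1) = w⁻¹ ^ ((p+1) * ((k+1)/(p+1)) + (p+1)) * ζ ((k+1)%(p+1)) + L := by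
        simp only [hfdef]
        rw [show (k+p+1)+1 = (k+1)+(p+1) by omega, Nat.add_div_right _ (by omega : 0 < p+1),
          Nat.add_mod_right, Nat.mul_add, Nat.mul_one]
      rw [hfkN, hfp]
      simp only [hfdef]
      linear_combination (w⁻¹ ^ ((p+1)*((k+1)/(p+1))) * ζ ((k+1)%(p+1)) + L) * hcancel
    have hdist : dist x y ≤ 2*ε/3 := by
      rw [Subtype.dist_eq]
      apply (BoundedContinuousFunction.dist_le (by linarith)).2
      intro k
      rw [dist_eq_norm]
      have hxk : (x : ℕ →ᵇ 𝕜) k = f k := hxcoe k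
      rcases lt_or_ge (k+1) (p+1) with hk | hk
      · have h1 : (k+1)/(p+1) = 0 := Nat.div_eq_of_lt hk
        have h2 : (k+1)%(p+1) = k+1 := Nat.mod_eq_of_lt hk
        have h3 : f k = (y : ℕ →ᵇ 𝕜) k := by
          simp [hfdef, h1, h2, hζdef]
        rw [hxk, h3]
        simp only [sub_self, norm_zero]
        linarith
      · have hq1 : 1 ≤ (k+1)/(p+1) := (Nat.one_le_div_iff (by omega)).2 hk
        have hfar : ‖f k - L‖ ≤ ε/3 := by
          have h2 : ‖w‖⁻¹ ^ ((p+1)*((k+1)/(p+1))) ≤ ‖w‖⁻¹ ^ (p+1) :=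
            pow_le_pow_of_le_one (by positivity) hwinv1 (Nat.le_mul_of_pos_right _ hq1)
        
          have hwN : (0:ℝ) < ‖w‖ ^ (p+1) := by positivity
          have hCb : C ≤ ‖w‖^(p+1) * (ε/3) := by
            have := (div_le_iff₀ (by linarith : (0:ℝ) < ε/3)).1 hNw
            linarith
          have h4 : ‖w‖⁻¹ ^ (p+1) * C ≤ ε/3 := by
            rw [inv_pow, inv_mul_le_iff₀ hwN]
            linarith
          calc ‖f k - L‖ ≤ ‖w‖⁻¹ ^ ((p+1) * ((k+1)/(p+1))) * C := hftail k
            _ ≤ ‖w‖⁻¹ ^ (p+1) * C := mul_le_mul_of_nonneg_right h2 hC0.le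
            _ ≤ ε/3 := h4
        have hyk : ‖(y : ℕ →ᵇ 𝕜) k - L‖ ≤ ε/3 := hm k (by omega)
        have h5 : ‖f k - (y : ℕ →ᵇ 𝕜) k‖ ≤ ‖f k - L‖ + ‖(y : ℕ →ᵇ 𝕜) k - L‖ := by
          have h6 := norm_sub_le (f k - L) ((y : ℕ →ᵇ 𝕜) k - L)
          have h7 : f k - L - ((y : ℕ →ᵇ 𝕜) k - L) = f k - (y : ℕ →ᵇ 𝕜) k := by ring
          rw [h7] at h6
          exact h6
        rw [hxk]
        linarith
    refine ⟨x, Metric.mem_ball.2 (by linarith), ⟨p+1, by omega, hfix⟩⟩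
  classical
  -- a dense countable family in `convSeq 𝕜`
  obtain ⟨u, hu⟩ : ∃ u : ℕ → 𝕜, DenseRange u := TopologicalSpace.exists_dense_seq 𝕜
  have hudense := Metric.denseRange_iff.1 hu
  have happrox : ∀ (y : convSeq 𝕜) (ε : ℝ), 0 < ε → ∃ p : List ℕ × ℕ,
      dist (approxSeq 𝕜 u p) y < ε := by
    intro y ε hε
    obtain ⟨m, hm⟩ : ∃ m, ∀ k ≥ m, ‖(y : ℕ →ᵇ 𝕜) k - l y‖ ≤ ε/3 := by
      obtain ⟨m, hm⟩ := Metric.tendsto_atTop.1 (hl y) (ε/3) (by linarith)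
      exact ⟨m, fun k hk => by have := hm k hk; rw [dist_eq_norm] at this; linarith⟩
    have hsel : ∀ b : 𝕜, ∃ a : ℕ, dist b (u a) < ε/3 := fun b => hudense b (ε/3) (by linarith)
    choose a ha using hsel
    set p : List ℕ × ℕ := ((List.range m).map fun k => a ((y : ℕ →ᵇ 𝕜) k), a (l y)) with hpdef
    refine ⟨p, ?_⟩
    rw [Subtype.dist_eq]
    have hlenp : p.1.length = m := by simp [hpdef]
    have hb : dist ((approxSeq 𝕜 u p : convSeq 𝕜) : ℕ →ᵇ 𝕜) (y : ℕ →ᵇ 𝕜) ≤ 2*ε/3 := by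
      apply (BoundedContinuousFunction.dist_le (by linarith)).2
      intro k
      rw [dist_eq_norm, approxSeq_coe]
      rcases lt_or_ge k m with hk | hk
      · have hlen : k < p.1.length := by omega
        rw [List.getD_eq_getElem p.1 p.2 hlen]
        have hget : p.1[k] = a ((y : ℕ →ᵇ 𝕜) k) := by simp [hpdef, hk]
        rw [hget]
        have h1 := ha ((y : ℕ →ᵇ 𝕜) k)
        rw [dist_eq_norm] at h1
        rw [norm_sub_rev]
        linarith
      · have hlen : p.1.length ≤ k := by omega
        rw [List.getD_eq_default p.1 p.2 hlen]
        have h1 := ha (l y)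
        rw [dist_eq_norm] at h1
        have h2 := hm k hk
        have h3 : u p.2 - (y : ℕ →ᵇ 𝕜) k
            = -(l y - u (a (l y))) + -((y : ℕ →ᵇ 𝕜) k - l y) := by
          simp only [hpdef]; ring
        rw [h3]
        calc ‖-(l y - u (a (l y))) + -((y : ℕ →ᵇ 𝕜) k - l y)‖
            ≤ ‖-(l y - u (a (l y)))‖ + ‖-((y : ℕ →ᵇ 𝕜) k - l y)‖ := norm_add_le _ _
          _ ≤ 2*ε/3 := by rw [norm_neg, norm_neg]; linarith
    calc dist ((approxSeq 𝕜 u p : convSeq 𝕜) : ℕ →ᵇ 𝕜) (y : ℕ →ᵇ 𝕜) ≤ 2*ε/3 := hb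
      _ < ε := by linarith
  set Y : ℕ → convSeq 𝕜 :=
    fun i => approxSeq 𝕜 u (Denumerable.ofNat (List ℕ × ℕ) i.unpair.1) with hYdef
  have hY : ∀ (y : convSeq 𝕜) (ε : ℝ), 0 < ε → ∀ B : ℕ, ∃ i, B ≤ i ∧ dist (Y i) y < ε := by
    intro y ε hε B
    obtain ⟨p, hp⟩ := happrox y ε hε
    refine ⟨Nat.pair (Encodable.encode p) B, Nat.right_le_pair _ _, ?_⟩
    simp only [hYdef, Nat.unpair_pair, Denumerable.ofNat_encode]
    exact hp
  -- block data
  set ζ : ℕ → ℕ → 𝕜 :=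
    fun i j => if j = 0 then l (Y i) else ((Y i : convSeq 𝕜) : ℕ →ᵇ 𝕜) (j-1) - l (Y i) with hζdef
  set C : ℕ → ℝ := fun i => 2 * ‖((Y i : convSeq 𝕜) : ℕ →ᵇ 𝕜)‖ + 1 with hCdef
  have hC0 : ∀ i, 0 < C i := fun i => by simp only [hCdef]; positivity
  have hζC : ∀ i j, ‖ζ i j‖ ≤ C i := by
    intro i j
    have h1 : ‖l (Y i)‖ ≤ ‖((Y i : convSeq 𝕜) : ℕ →ᵇ 𝕜)‖ := hl_norm (Y i)
    by_cases h : j = 0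
    · simp only [hζdef, if_pos h, hCdef]
      nlinarith [norm_nonneg ((Y i : convSeq 𝕜) : ℕ →ᵇ 𝕜)]
    · simp only [hζdef, if_neg h, hCdef]
      have h2 := ((Y i : convSeq 𝕜) : ℕ →ᵇ 𝕜).norm_coe_le_norm (j-1)
      have h3 := norm_sub_le (((Y i : convSeq 𝕜) : ℕ →ᵇ 𝕜) (j-1)) (l (Y i))
      linarith
  have hmex : ∀ i, ∃ m, 1 ≤ m ∧ ∀ j, m ≤ j → ‖ζ i j‖ ≤ (2:ℝ)⁻¹^i := by
    intro i
    obtain ⟨m0, hm0⟩ := Metric.tendsto_atTop.1 (hl (Y i)) ((2:ℝ)⁻¹^i) (by positivity)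
    refine ⟨m0 + 1, by omega, ?_⟩
    intro j hj
    have hj0 : j ≠ 0 := by omega
    simp only [hζdef, if_neg hj0]
    have h1 := hm0 (j-1) (by omega)
    rw [dist_eq_norm] at h1
    linarith
  choose m hm1 hm2 using hmex
  have hsex : ∀ i, ∃ t, 1 ≤ t ∧ (2:ℝ)^i * (C i + 1) ≤ ‖w‖ ^ t := fun i => hpow_big _ _
  choose s hs1 hs2 using hsex
  set n : ℕ → ℕ :=
    fun i => (∑ j ∈ Finset.range i, (m j + 1)) + (∑ j ∈ Finset.range (i+1), s j) with hndef
  have hnsucc : ∀ i, n (i+1) = n i + (m i + 1) + s (i+1) := by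
    intro i
    simp only [hndef, Finset.sum_range_succ]
    ring
  have hmono : ∀ i i', i ≤ i' → n i ≤ n i' := by
    intro i i' h
    simp only [hndef]
    have h1 : (∑ j ∈ Finset.range i, (m j + 1)) ≤ ∑ j ∈ Finset.range i', (m j + 1) :=
      Finset.sum_le_sum_of_subset (Finset.range_subset_range.2 h)
    have h2 : (∑ j ∈ Finset.range (i+1), s j) ≤ ∑ j ∈ Finset.range (i'+1), s j :=
      Finset.sum_le_sum_of_subset (Finset.range_subset_range.2 (by omega))
    omega
  have hblock_lt : ∀ i, n i + m i < n (i+1) := by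
    intro i
    have h1 := hnsucc i
    have h2 := hs1 (i+1)
    omega
  have han : ∀ i i', i < i' → n i + s i' ≤ n i' := by
    intro i i' h
    have h1 : n i' = (∑ j ∈ Finset.range i', (m j + 1))
        + ((∑ j ∈ Finset.range i', s j) + s i') := by
      simp only [hndef, Finset.sum_range_succ]
    have h2 : (∑ j ∈ Finset.range i, (m j + 1)) ≤ ∑ j ∈ Finset.range i', (m j + 1) :=
      Finset.sum_le_sum_of_subset (Finset.range_subset_range.2 (by omega))
    have h3 : (∑ j ∈ Finset.range (i+1), s j) ≤ ∑ j ∈ Finset.range i', s j :=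
      Finset.sum_le_sum_of_subset (Finset.range_subset_range.2 (by omega))
    have h4 : n i = (∑ j ∈ Finset.range i, (m j + 1)) + (∑ j ∈ Finset.range (i+1), s j) := rfl
    omega
  have hs_le_n : ∀ i, s i ≤ n i := by
    intro i
    have h1 : s i ≤ ∑ j ∈ Finset.range (i+1), s j :=
      Finset.single_le_sum (f := s) (fun j _ => Nat.zero_le _) (Finset.self_mem_range_succ i)
    have h4 : n i = (∑ j ∈ Finset.range i, (m j + 1)) + (∑ j ∈ Finset.range (i+1), s j) := rfl
    omega
  have hn1 : ∀ i, 1 ≤ n i := fun i => le_trans (hs1 i) (hs_le_n i)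
  have hn_pow : ∀ i, (2:ℝ)^i * (C i + 1) ≤ ‖w‖ ^ (n i) := by
    intro i
    calc (2:ℝ)^i * (C i + 1) ≤ ‖w‖ ^ (s i) := hs2 i
      _ ≤ ‖w‖ ^ (n i) := pow_le_pow_right₀ hw1 (hs_le_n i)
  have hgap_pow : ∀ i i', i < i' → ‖w‖^(n i) * ((2:ℝ)^i' * (C i' + 1)) ≤ ‖w‖^(n i') := by
    intro i i' h
    have h0 : (0:ℝ) < ‖w‖^(n i) := by positivity
    calc ‖w‖^(n i) * ((2:ℝ)^i' * (C i' + 1)) ≤ ‖w‖^(n i) * ‖w‖^(s i') := by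
          nlinarith [hs2 i']
      _ = ‖w‖^(n i + s i') := (pow_add _ _ _).symm
      _ ≤ ‖w‖^(n i') := pow_le_pow_right₀ hw1 (han i i' h)
  have huniq : ∀ i i' p, n i ≤ p → p ≤ n i + m i → n i' ≤ p → p ≤ n i' + m i' → i = i' := by
    intro i i' p h1 h2 h3 h4
    by_contra hne
    rcases Nat.lt_or_ge i i' with h | h
    · have h5 := hblock_lt i
      have h6 := hmono (i+1) i' (by omega)
      omega
    · have h5 := hblock_lt i'
      have h6 := hmono (i'+1) i (by omega)
      omega
  set z : ℕ → 𝕜 := fun p => if h : ∃ i, n i ≤ p ∧ p ≤ n i + m i then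
      w⁻¹ ^ (n h.choose) * ζ h.choose (p - n h.choose) else 0 with hzdef
  have hzval : ∀ i j, j ≤ m i → z (n i + j) = w⁻¹ ^ (n i) * ζ i j := by
    intro i j hj
    have hex : ∃ i', n i' ≤ n i + j ∧ n i + j ≤ n i' + m i' := ⟨i, Nat.le_add_right _ _, by omega⟩
    simp only [hzdef]
    rw [dif_pos hex]
    have hspec := hex.choose_spec
    have heq : hex.choose = i := huniq _ _ _ hspec.1 hspec.2 (Nat.le_add_right _ _) (by omega)
    rw [heq, Nat.add_sub_cancel_left]
  have hzcase : ∀ p, z p = 0 ∨ ∃ i, n i ≤ p ∧ p ≤ n i + m i ∧ z p = w⁻¹ ^ (n i) * ζ i (p - n i) := by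
    intro p
    by_cases hex : ∃ i, n i ≤ p ∧ p ≤ n i + m i
    · right
      refine ⟨hex.choose, hex.choose_spec.1, hex.choose_spec.2, ?_⟩
      simp only [hzdef]
      rw [dif_pos hex]
    · left
      simp only [hzdef]
      rw [dif_neg hex]
  have hzbound : ∀ i j, ‖w⁻¹ ^ (n i) * ζ i j‖ ≤ (2:ℝ)⁻¹ ^ i := by
    intro i j
    rw [norm_mul, norm_pow, norm_inv]
    have h1 := hn_pow i
    have h2 := hζC i j
    have h3 : (0:ℝ) < ‖w‖^(n i) := by positivity
    have h4 : (0:ℝ) < (2:ℝ)^i := by positivity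
    have h5 : (2:ℝ)^i * (2:ℝ)⁻¹^i = 1 := by rw [← mul_pow]; norm_num
    have goal' : ‖ζ i j‖ * (2:ℝ)^i ≤ ‖w‖^(n i) := by nlinarith [norm_nonneg (ζ i j), hC0 i]
    have h6 : ‖w‖⁻¹^(n i) * ‖ζ i j‖ = ‖ζ i j‖ / ‖w‖^(n i) := by
      rw [inv_pow]; ring
    rw [h6, div_le_iff₀ h3]
    nlinarith [goal', pow_nonneg (by norm_num : (0:ℝ) ≤ 2⁻¹) i, norm_nonneg (ζ i j)]
  have hz1 : ∀ p, ‖z p‖ ≤ 1 := by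
    intro p
    rcases hzcase p with h | ⟨i, _, _, h⟩
    · rw [h]; simp
    · rw [h]
      calc ‖w⁻¹ ^ (n i) * ζ i (p - n i)‖ ≤ (2:ℝ)⁻¹^i := hzbound i _
        _ ≤ 1 := pow_le_one₀ (by norm_num) (by norm_num)
  have hzlim : Tendsto (fun k : ℕ => z (k+1)) atTop (nhds 0) := by
    rw [NormedAddCommGroup.tendsto_nhds_zero]
    intro ε hε
    obtain ⟨I, hI⟩ : ∃ I : ℕ, (2:ℝ)⁻¹^I < ε := exists_pow_lt_of_lt_one hε (by norm_num)
    filter_upwards [eventually_ge_atTop (n I)] with k hk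
    rcases hzcase (k+1) with h | ⟨i, hi1, hi2, h⟩
    · rw [h]; simpa using hε
    · rw [h]
      have hI_le : I ≤ i := by
        by_contra hc
        push_neg at hc
        have h1 := hblock_lt i
        have h2 := hmono (i+1) I (by omega)
        omega
      calc ‖w⁻¹ ^ (n i) * ζ i (k+1 - n i)‖ ≤ (2:ℝ)⁻¹^i := hzbound i _
        _ ≤ (2:ℝ)⁻¹^I := pow_le_pow_of_le_one (by norm_num) (by norm_num) hI_le
        _ < ε := hI
  set x : convSeq 𝕜 := mkConv 𝕜 (fun k => z (k+1)) 1 (fun k => hz1 (k+1)) 0 hzlim with hxdef2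
  have hxcoe2 : ∀ k, ((x : convSeq 𝕜) : ℕ →ᵇ 𝕜) k = z (k+1) := fun k => rfl
  have hlx2 : l x = 0 := hlim_unique x 0 (by simpa [hxcoe2] using hzlim)
  have hmain : ∀ i, dist ((A ^ (n i)) x) (Y i) ≤ 2 * (2:ℝ)⁻¹^i := by
    intro i
    obtain ⟨p, hp⟩ : ∃ p, n i = p + 1 := ⟨n i - 1, by have := hn1 i; omega⟩
    rw [Subtype.dist_eq]
    apply (BoundedContinuousFunction.dist_le (by positivity)).2
    intro k
    rw [dist_eq_norm]
    have hcoord : (((A ^ (n i)) x : convSeq 𝕜) : ℕ →ᵇ 𝕜) k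
        = w^(n i) * (z (k + n i + 1) + z (n i)) := by
      rw [hp, key x p k, hlx2]
      simp only [hxcoe2, mul_zero, sub_zero]
      have e : k + p + 1 + 1 = k + (p+1) + 1 := by omega
      rw [e]
    rw [hcoord]
    have hz_ni : z (n i) = w⁻¹ ^ (n i) * ζ i 0 := by
      have h0 := hzval i 0 (Nat.zero_le _)
      simpa using h0
    have hζ0 : ζ i 0 = l (Y i) := by simp [hζdef]
    have hcancel : w ^ (n i) * w⁻¹ ^ (n i) = 1 := by
      rw [← mul_pow, mul_inv_cancel₀ hw0, one_pow]
    rcases le_or_gt (k+1) (m i) with hk | hk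
    · have hz_k : z (k + n i + 1) = w⁻¹ ^ (n i) * ζ i (k+1) := by
        rw [show k + n i + 1 = n i + (k+1) by omega]
        exact hzval i (k+1) hk
      have hζk : ζ i (k+1) = ((Y i : convSeq 𝕜) : ℕ →ᵇ 𝕜) k - l (Y i) := by
        simp [hζdef]
      rw [hz_k, hz_ni, hζk, hζ0]
      have hzero : w ^ (n i) * (w⁻¹ ^ (n i) * (((Y i : convSeq 𝕜) : ℕ →ᵇ 𝕜) k - l (Y i))
          + w⁻¹ ^ (n i) * l (Y i)) - ((Y i : convSeq 𝕜) : ℕ →ᵇ 𝕜) k = 0 := by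
        linear_combination (((Y i : convSeq 𝕜) : ℕ →ᵇ 𝕜) k) * hcancel
      rw [hzero, norm_zero]
      positivity
    · have hζk : ‖ζ i (k+1)‖ ≤ (2:ℝ)⁻¹^i := hm2 i (k+1) (by omega)
      have hζk' : ζ i (k+1) = ((Y i : convSeq 𝕜) : ℕ →ᵇ 𝕜) k - l (Y i) := by
        simp [hζdef]
      have hsplit : w ^ (n i) * (z (k + n i + 1) + z (n i)) - ((Y i : convSeq 𝕜) : ℕ →ᵇ 𝕜) k
          = w ^ (n i) * z (k + n i + 1) - ζ i (k+1) := by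
        rw [hz_ni, hζ0, hζk']
        linear_combination (l (Y i)) * hcancel
      rw [hsplit]
      have hleak : ‖w ^ (n i) * z (k + n i + 1)‖ ≤ (2:ℝ)⁻¹^i := by
        rcases hzcase (k + n i + 1) with h | ⟨i', hi1, hi2, h⟩
        · rw [h, mul_zero, norm_zero]; positivity
        · have hii' : i < i' := by
            by_contra hc
            push_neg at hc
            have h2 : n i' + m i' ≤ n i + m i := by
              rcases Nat.lt_or_ge i' i with hlt | hge
              · have h5 := hblock_lt i'
                have h6 := hmono (i'+1) i (by omega)
                omega
              · have he : i' = i := by omega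
                rw [he]
            omega
          rw [h, norm_mul, norm_mul, norm_pow, norm_pow, norm_inv, ← mul_assoc]
          have hg := hgap_pow i i' hii'
          have hc2 : ‖ζ i' (k + n i + 1 - n i')‖ ≤ C i' := hζC i' _
          have h3 : (0:ℝ) < ‖w‖^(n i') := by positivity
          have h3' : (0:ℝ) < ‖w‖^(n i) := by positivity
          have h4 : (0:ℝ) < (2:ℝ)^i' := by positivity
          have h5 : (2:ℝ)^i' * (2:ℝ)⁻¹^i' = 1 := by rw [← mul_pow]; norm_num
          have h6 : (2:ℝ)⁻¹^i' ≤ (2:ℝ)⁻¹^i :=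
            pow_le_pow_of_le_one (by norm_num) (by norm_num) hii'.le
          have hkey : ‖w‖^(n i) * ‖ζ i' (k + n i + 1 - n i')‖ * (2:ℝ)^i' ≤ ‖w‖^(n i') := by
            nlinarith [norm_nonneg (ζ i' (k + n i + 1 - n i')), hC0 i']
          have h7 : ‖w‖^(n i) * ‖w‖⁻¹^(n i') * ‖ζ i' (k + n i + 1 - n i')‖ ≤ (2:ℝ)⁻¹^i' := by
            have h8 : ‖w‖^(n i) * ‖w‖⁻¹^(n i') * ‖ζ i' (k + n i + 1 - n i')‖
                = (‖w‖^(n i) * ‖ζ i' (k + n i + 1 - n i')‖) / ‖w‖^(n i') := by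
              rw [inv_pow]; ring
            rw [h8, div_le_iff₀ h3]
            nlinarith [hkey, pow_nonneg (by norm_num : (0:ℝ) ≤ 2⁻¹) i',
              norm_nonneg (ζ i' (k + n i + 1 - n i')), h3']
          exact le_trans h7 h6
      calc ‖w ^ (n i) * z (k + n i + 1) - ζ i (k+1)‖
          ≤ ‖w ^ (n i) * z (k + n i + 1)‖ + ‖ζ i (k+1)‖ := norm_sub_le _ _
        _ ≤ 2 * (2:ℝ)⁻¹^i := by linarith
  refine ⟨⟨x, ?_⟩, hper⟩
  rw [Metric.dense_iff]
  intro y ε hε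
  obtain ⟨B, hB⟩ : ∃ B : ℕ, (2:ℝ)⁻¹^B < ε/4 :=
    exists_pow_lt_of_lt_one (by linarith) (by norm_num)
  obtain ⟨i, hiB, hi⟩ := hY y (ε/2) (by linarith) B
  refine ⟨(A ^ (n i)) x, Metric.mem_ball.2 ?_, Set.mem_range.2 ⟨n i, rfl⟩⟩
  have h1 := hmain i
  have h2 : (2:ℝ)⁻¹^i ≤ (2:ℝ)⁻¹^B := pow_le_pow_of_le_one (by norm_num) (by norm_num) hiB
  calc dist ((A ^ (n i)) x) y ≤ dist ((A ^ (n i)) x) (Y i) + dist (Y i) y := dist_triangle _ _ _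
    _ < ε := by linarith
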